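/- Let H be a Hilbert space, T : H → H a bounded idempotent (T² = T) with adjoint T⋆. Then Id + T − T⋆ is invertible, and T₀ := T (Id + T − T⋆)⁻¹ is the orthogonal projection onto rg T. -/

import Mathlib

open ContinuousLinearMap in
private lemma aux_norm_le {H : Type*} [NormedAddCommGroup H] [InnerProductSpace ℂ H]
    (A : H →L[ℂ] H) (h : ∀ x : H, (‖x‖ : ℝ)^2 ≤ (inner ℂ (A x) x : ℂ).re) :
    ∀ x : H, ‖x‖ ≤ ‖A x‖ := by
  intro x
  rcases eq_or_ne x 0 with rfl | hx
  · simp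
  · have h1 : (‖x‖ : ℝ)^2 ≤ ‖(inner ℂ (A x) x : ℂ)‖ :=
      le_trans (h x) (Complex.re_le_norm _)
    have h2 : ‖(inner ℂ (A x) x : ℂ)‖ ≤ ‖A x‖ * ‖x‖ := norm_inner_le_norm _ _
    have hxpos : (0:ℝ) < ‖x‖ := norm_pos_iff.mpr hx
    nlinarith [le_trans h1 h2]

/-- Booss–Lesch–Zhu Lemma 3.5(b): for a bounded idempotent `T` on a Hilbert space,
`Id + T - T⋆` is invertible and `T (Id + T - T⋆)⁻¹` is the orthogonal projection
(self-adjoint idempotent) onto `rg T`. -/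
theorem stmt3 {H : Type*} [NormedAddCommGroup H] [InnerProductSpace ℂ H] [CompleteSpace H]
    (T : H →L[ℂ] H) (hT : T ∘L T = T) :
    ∃ S : H →L[ℂ] H,
      (1 + T - ContinuousLinearMap.adjoint T) ∘L S = 1 ∧
      S ∘L (1 + T - ContinuousLinearMap.adjoint T) = 1 ∧
      IsSelfAdjoint (T ∘L S) ∧
      (T ∘L S) ∘L (T ∘L S) = T ∘L S ∧
      LinearMap.range ((T ∘L S) : H →ₗ[ℂ] H) = LinearMap.range (T : H →ₗ[ℂ] H) := by
  have hstar : ContinuousLinearMap.adjoint T = star T := rfl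
  set A : H →L[ℂ] H := 1 + T - star T with hA
  have hAstar : star A = 1 + star T - T := by
    simp [hA, star_sub, star_add]
  -- real part computation
  have hre : ∀ (B : H →L[ℂ] H) (x : H),
      (inner ℂ ((1 + B - star B) x) x : ℂ).re = (‖x‖:ℝ)^2 := by
    intro B x
    have : ((1 + B - star B) x) = x + B x - star B x := by
      simp [ContinuousLinearMap.sub_apply, ContinuousLinearMap.add_apply]
    rw [this]
    have hadj : (inner ℂ ((star B) x) x : ℂ) = inner ℂ x (B x) :=
      ContinuousLinearMap.adjoint_inner_left B x x
    rw [inner_sub_left, inner_add_left, hadj]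
    have hconj : (inner ℂ x (B x) : ℂ) = starRingEnd ℂ (inner ℂ (B x) x) :=
      (inner_conj_symm _ _).symm
    rw [hconj]
    simp only [Complex.add_re, Complex.sub_re, Complex.conj_re, sq]
    have : (inner ℂ x x : ℂ) = (‖x‖:ℂ)^2 := inner_self_eq_norm_sq_to_K x
    rw [this]
    simp [sq]
  have hbA : ∀ x : H, ‖x‖ ≤ ‖A x‖ := by
    refine aux_norm_le A fun x => ?_
    rw [hA, hre T x]
  have hbAs : ∀ x : H, ‖x‖ ≤ ‖(star A) x‖ := by
    refine aux_norm_le (star A) fun x => ?_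
    have : star A = 1 + (star T) - star (star T) := by rw [hAstar, star_star]
    rw [this, hre (star T) x]
  -- injectivity
  have hker : LinearMap.ker (A : H →ₗ[ℂ] H) = ⊥ := by
    rw [LinearMap.ker_eq_bot']
    intro x hx
    have := hbA x
    rw [show A x = 0 from hx, norm_zero] at this
    exact norm_le_zero_iff.mp this
  -- closed range
  have hanti : AntilipschitzWith 1 A :=
    A.antilipschitz_of_bound (by simpa using hbA)
  have hclosed : IsClosed (Set.range A) :=
    hanti.isClosed_range A.uniformContinuous
  have hcompl : CompleteSpace (LinearMap.range (A : H →ₗ[ℂ] H)) := hanti.completeSpace_range_clm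
  -- surjectivity
  have hrange : LinearMap.range (A : H →ₗ[ℂ] H) = ⊤ := by
    rw [← Submodule.orthogonal_eq_bot_iff (K := LinearMap.range (A : H →ₗ[ℂ] H))]
    rw [Submodule.eq_bot_iff]
    intro x hx
    have hAx : (star A) x = 0 := by
      apply ext_inner_right ℂ
      intro y
      have h1 : (inner ℂ ((star A) x) y : ℂ) = inner ℂ x (A y) :=
        ContinuousLinearMap.adjoint_inner_left A y x
      have h2 : (inner ℂ (A y) x : ℂ) = 0 :=
        hx (A y) (LinearMap.mem_range_self _ y)
      have h3 : (inner ℂ x (A y) : ℂ) = 0 := by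
        rw [← inner_conj_symm, h2, map_zero]
      rw [h1, h3, inner_zero_left]
    have := hbAs x
    rw [hAx, norm_zero] at this
    exact norm_le_zero_iff.mp this
  -- invertibility
  let e : H ≃L[ℂ] H := ContinuousLinearEquiv.ofBijective A hker hrange
  set S : H →L[ℂ] H := e.symm.toContinuousLinearMap with hS
  have he : ∀ x, e x = A x := fun x =>
    congrFun (ContinuousLinearEquiv.coeFn_ofBijective A hker hrange) x
  have h1 : A * S = 1 := by
    ext x
    show A (e.symm x) = x
    rw [← he (e.symm x)]
    exact e.apply_symm_apply x
  have h2 : S * A = 1 := by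
    ext x
    show e.symm (A x) = x
    rw [← he x]
    exact e.symm_apply_apply x
  have hTT : T * T = T := hT
  have hTsTs : star T * star T = star T := by
    rw [← star_mul, hTT]
  -- key identity: star T * A = star A * T (= star T * T)
  have key1 : star T * A = star T * T := by
    have : star T * A = star T + star T * T - star T * star T := by
      rw [hA]; noncomm_ring
    rw [this, hTsTs]; abel
  have key2 : star A * T = star T * T := by
    have : star A * T = T + star T * T - T * T := by
      rw [hAstar]; noncomm_ring
    rw [this, hTT]; abel
  have hs1 : star S * star A = 1 := by rw [← star_mul, h1, star_one]
  have hs2 : star A * star S = 1 := by rw [← star_mul, h2, star_one]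
  set P : H →L[ℂ] H := T * S with hP
  have hPs : star P = P := by
    calc star P = star S * star T := by rw [hP, star_mul]
    _ = star S * star T * (A * S) := by rw [h1, mul_one]
    _ = star S * (star T * A) * S := by noncomm_ring
    _ = star S * (star A * T) * S := by rw [key1, key2]
    _ = (star S * star A) * (T * S) := by noncomm_ring
    _ = P := by rw [hs1, one_mul, hP]
  have hTP : T * P = P := by rw [hP, ← mul_assoc, hTT]
  have hPTs : P * star T = P := by
    have := congrArg star hTP
    rwa [star_mul, hPs] at this
  have hPT : P * T = T := by
    have hPA : P * A = T := by rw [hP, mul_assoc, h2, mul_one]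
    have : P * A = P + P * T - P * star T := by rw [hA]; noncomm_ring
    rw [hPA, hPTs] at this
    have := this.symm
    linear_combination (norm := abel) this
  have hPP : P * P = P := by rw [hP, ← mul_assoc, hPT]
  have hrg : LinearMap.range ((T ∘L S) : H →ₗ[ℂ] H) = LinearMap.range (T : H →ₗ[ℂ] H) := by
    apply le_antisymm
    · rintro x ⟨y, rfl⟩
      exact ⟨S y, rfl⟩
    · rintro x ⟨y, rfl⟩
      exact ⟨T y, congrFun (congrArg DFunLike.coe hPT) y⟩
  exact ⟨S, h1, h2, hPs, hPP, hrg⟩
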